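/- Let p ∈ ℕ with p ≥ 1 and set B_F = 2^p − 2^{−p}. Then round_p(exp(B_F)) = B_F and round_p(exp(−B_F)) = 0. -/

import Mathlib

/-- The set of fixed-point numbers of precision `p`:
`F_p = { s·a·2^{-p} : s ∈ {1,-1}, a ∈ ℕ, a ≤ 2^{2p} - 1 }`. -/
def Fp (p : ℕ) : Set ℝ :=
  {x | ∃ (s : ℝ) (a : ℕ), (s = 1 ∨ s = -1) ∧ a ≤ 2 ^ (2 * p) - 1 ∧
    x = s * a * (2 : ℝ) ^ (-(p : ℤ))}

/-- The maximal fixed-point number `B_F = 2^p - 2^{-p}`. -/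
noncomputable def BF (p : ℕ) : ℝ := 2 ^ p - (2 : ℝ) ^ (-(p : ℤ))

/-- `r` is the rounding of `x` to precision `p`: `r ∈ F_p` is closest to `x` among elements
of `F_p`, with ties broken in favor of the element of smaller absolute value. -/
def IsRound (p : ℕ) (x r : ℝ) : Prop :=
  r ∈ Fp p ∧ ∀ y ∈ Fp p, |x - r| < |x - y| ∨ (|x - r| = |x - y| ∧ |r| ≤ |y|)

lemma zpow_neg_eq (p : ℕ) : (2 : ℝ) ^ (-(p : ℤ)) = ((2:ℝ)^p)⁻¹ := by
  rw [zpow_neg, zpow_natCast]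

lemma twoP_pos (p : ℕ) : (0:ℝ) < (2:ℝ)^p := by positivity

lemma q_pos (p : ℕ) : (0:ℝ) < (2 : ℝ) ^ (-(p : ℤ)) := by positivity

lemma cast_bound (p : ℕ) : ((2 ^ (2 * p) - 1 : ℕ) : ℝ) = (2:ℝ)^(2*p) - 1 := by
  have h : (1:ℕ) ≤ 2 ^ (2*p) := Nat.one_le_two_pow
  push_cast [Nat.cast_sub h]
  ring

lemma prod_eq (p : ℕ) : ((2:ℝ)^(2*p) - 1) * (2 : ℝ) ^ (-(p : ℤ)) = BF p := by
  rw [zpow_neg_eq, BF, zpow_neg_eq]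
  have h2 : (2:ℝ)^(2*p) = (2:ℝ)^p * (2:ℝ)^p := by rw [two_mul, pow_add]
  have hne : (2:ℝ)^p ≠ 0 := (twoP_pos p).ne'
  field_simp [h2]
  rw [h2]; ring

lemma Fp_abs_le {p : ℕ} {y : ℝ} (hy : y ∈ Fp p) : |y| ≤ BF p := by
  obtain ⟨s, a, hs, ha, rfl⟩ := hy
  have hs1 : |s| = 1 := by rcases hs with rfl | rfl <;> simp
  have hq := q_pos p
  have haR : (a:ℝ) ≤ (2:ℝ)^(2*p) - 1 := by
    have := (Nat.cast_le (α := ℝ)).2 ha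
    rwa [cast_bound p] at this
  calc |s * a * (2 : ℝ) ^ (-(p : ℤ))| = (a:ℝ) * (2 : ℝ) ^ (-(p : ℤ)) := by
        rw [abs_mul, abs_mul, hs1, one_mul, abs_of_nonneg (Nat.cast_nonneg a),
          abs_of_pos hq]
    _ ≤ ((2:ℝ)^(2*p) - 1) * (2 : ℝ) ^ (-(p : ℤ)) := by
        exact mul_le_mul_of_nonneg_right haR hq.le
    _ = BF p := prod_eq p

lemma Fp_abs_ge {p : ℕ} {y : ℝ} (hy : y ∈ Fp p) (h0 : y ≠ 0) :
    (2 : ℝ) ^ (-(p : ℤ)) ≤ |y| := by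
  obtain ⟨s, a, hs, ha, rfl⟩ := hy
  have hs1 : |s| = 1 := by rcases hs with rfl | rfl <;> simp
  have hq := q_pos p
  have ha1 : 1 ≤ a := Nat.one_le_iff_ne_zero.2 (by rintro rfl; simp at h0)
  have : |s * a * (2 : ℝ) ^ (-(p : ℤ))| = (a:ℝ) * (2 : ℝ) ^ (-(p : ℤ)) := by
    rw [abs_mul, abs_mul, hs1, one_mul, abs_of_nonneg (Nat.cast_nonneg a), abs_of_pos hq]
  rw [this]
  nlinarith [(Nat.one_le_cast (α := ℝ)).2 ha1]

lemma BF_mem (p : ℕ) : BF p ∈ Fp p := by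
  refine ⟨1, 2 ^ (2*p) - 1, Or.inl rfl, le_refl _, ?_⟩
  rw [one_mul, cast_bound p, prod_eq p]

lemma zero_mem (p : ℕ) : (0:ℝ) ∈ Fp p := ⟨1, 0, Or.inl rfl, Nat.zero_le _, by simp⟩

lemma log_bound (p : ℕ) (hp : 1 ≤ p) : ((p:ℝ) + 1) * Real.log 2 < BF p := by
  have hl : Real.log 2 < 0.6931471808 := Real.log_two_lt_d9
  have hlpos : 0 < Real.log 2 := Real.log_pos (by norm_num)
  induction p with
  | zero => omega
  | succ n ih =>
    have e2 : (2:ℝ) ^ (-((n+1 : ℕ) : ℤ)) = (2:ℝ) ^ (-(n:ℤ)) / 2 := by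
      push_cast
      rw [neg_add, zpow_add₀ (by norm_num : (2:ℝ) ≠ 0)]
      norm_num
      ring
    rcases Nat.eq_zero_or_pos n with rfl | hn
    · simp only [BF, e2]
      norm_num
      nlinarith
    · have h1 := ih hn
      have hq := q_pos n
      have h2n : (1:ℝ) ≤ (2:ℝ)^n := one_le_pow₀ (by norm_num)
      simp only [BF, e2, pow_succ] at *
      push_cast
      nlinarith

/-- `round_p (exp B_F) = B_F` and `round_p (exp (-B_F)) = 0`. -/
theorem round_exp_BF (p : ℕ) (hp : 1 ≤ p) :
    (∀ r : ℝ, IsRound p (Real.exp (BF p)) r → r = BF p) ∧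
    (∀ r : ℝ, IsRound p (Real.exp (-(BF p))) r → r = 0) := by
  have hq := q_pos p
  have hBFpos : 0 < BF p := by
    have : (2:ℝ)^(-(p:ℤ)) ≤ 1 := by
      rw [zpow_neg_eq, inv_le_one_iff₀]; right; exact one_le_pow₀ (by norm_num)
    have h2 : (2:ℝ) ≤ (2:ℝ)^p := by
      calc (2:ℝ) = 2^1 := by norm_num
        _ ≤ 2^p := pow_le_pow_right₀ (by norm_num) hp
    simp only [BF]; linarith
  constructor
  · intro r ⟨hrF, hr⟩
    set x := Real.exp (BF p) with hx
    have hxgt : BF p < x := by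
      have := Real.add_one_le_exp (BF p)
      linarith
    have hrle : r ≤ BF p := (abs_le.1 (Fp_abs_le hrF)).2
    rcases hr (BF p) (BF_mem p) with h | ⟨h, _⟩
    · exfalso
      rw [abs_of_pos (by linarith), abs_of_pos (by linarith)] at h
      linarith
    · rw [abs_of_pos (by linarith), abs_of_pos (by linarith)] at h
      linarith
  · intro r ⟨hrF, hr⟩
    set x := Real.exp (-(BF p)) with hx
    have hxpos : 0 < x := Real.exp_pos _
    have hlog : Real.log ((2:ℝ)^(-(p:ℤ))/2) = -(((p:ℝ)+1) * Real.log 2) := by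
      rw [Real.log_div (by positivity) (by norm_num), Real.log_zpow]
      push_cast
      ring
    have hxlt : x < (2:ℝ)^(-(p:ℤ)) / 2 := by
      have h := log_bound p hp
      calc x = Real.exp (-(BF p)) := hx
        _ < Real.exp (Real.log ((2:ℝ)^(-(p:ℤ))/2)) :=
            Real.exp_lt_exp.2 (by rw [hlog]; linarith)
        _ = _ := Real.exp_log (by positivity)
    by_contra hne
    have hrge : (2:ℝ)^(-(p:ℤ)) ≤ |r| := Fp_abs_ge hrF hne
    have h1 : x < |x - r| := by
      have : |r| - |x| ≤ |x - r| := by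
        rw [abs_sub_comm]; exact abs_sub_abs_le_abs_sub r x
      rw [abs_of_pos hxpos] at this
      linarith
    rcases hr 0 (zero_mem p) with h | ⟨h, h2⟩
    · rw [sub_zero, abs_of_pos hxpos] at h; linarith
    · rw [sub_zero, abs_of_pos hxpos] at h; linarith
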